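/- For every ω ∈ [0, 2] and every index i, the i-th smallest eigenvalue (counted with multiplicity) of the self-adjoint superoperator B − ωC is at least (1 − ω/2) times the i-th smallest eigenvalue of B: λᵢ(B − ωC) ≥ (1 − ω/2)·λᵢ(B). -/

import Mathlib

open Matrix

noncomputable def s7ip {n : ℕ} (X Y : Matrix (Fin n) (Fin n) ℝ) : ℝ := (Xᵀ * Y).trace

section s7lemmas
variable {n : ℕ}

lemma s7ip_sub (X Y Z : Matrix (Fin n) (Fin n) ℝ) : s7ip X (Y - Z) = s7ip X Y - s7ip X Z := by
  simp [s7ip, Matrix.mul_sub]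

lemma s7ip_smul (X Y : Matrix (Fin n) (Fin n) ℝ) (c : ℝ) : s7ip X (c • Y) = c * s7ip X Y := by
  simp [s7ip, Matrix.mul_smul]

lemma s7ip_sum {ι : Type*} (s : Finset ι) (X : Matrix (Fin n) (Fin n) ℝ)
    (M : ι → Matrix (Fin n) (Fin n) ℝ) :
    s7ip X (∑ j ∈ s, M j) = ∑ j ∈ s, s7ip X (M j) := by
  simp [s7ip, Matrix.mul_sum]

lemma s7ip_sum_right {ι : Type*} (s : Finset ι) (X : Matrix (Fin n) (Fin n) ℝ)
    (c : ι → ℝ) (M : ι → Matrix (Fin n) (Fin n) ℝ) :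
    s7ip X (∑ j ∈ s, c j • M j) = ∑ j ∈ s, c j * s7ip X (M j) := by
  simp [s7ip_sum, s7ip_smul]

lemma s7ip_sum_left {ι : Type*} (s : Finset ι) (X : Matrix (Fin n) (Fin n) ℝ)
    (c : ι → ℝ) (M : ι → Matrix (Fin n) (Fin n) ℝ) :
    s7ip (∑ j ∈ s, c j • M j) X = ∑ j ∈ s, c j * s7ip (M j) X := by
  simp [s7ip, Matrix.sum_mul, Matrix.transpose_sum, Matrix.smul_mul]

lemma s7ip_sum_sum {ι κ : Type*} (s : Finset ι) (t : Finset κ)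
    (a : ι → ℝ) (b : κ → ℝ)
    (M : ι → Matrix (Fin n) (Fin n) ℝ) (Q : κ → Matrix (Fin n) (Fin n) ℝ) :
    s7ip (∑ j ∈ s, a j • M j) (∑ k ∈ t, b k • Q k)
      = ∑ j ∈ s, ∑ k ∈ t, a j * (b k * s7ip (M j) (Q k)) := by
  rw [s7ip_sum_left]
  exact Finset.sum_congr rfl fun j _ => by rw [s7ip_sum_right, Finset.mul_sum]

lemma s7ip_self_nonneg (X : Matrix (Fin n) (Fin n) ℝ) : 0 ≤ s7ip X X := by
  unfold s7ip
  rw [Matrix.trace]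
  refine Finset.sum_nonneg fun i _ => ?_
  simp only [Matrix.diag_apply, Matrix.mul_apply, Matrix.transpose_apply]
  exact Finset.sum_nonneg fun j _ => mul_self_nonneg _

lemma s7ip_zero (X : Matrix (Fin n) (Fin n) ℝ) : s7ip X 0 = 0 := by simp [s7ip]

lemma s7_proj_key (P X : Matrix (Fin n) (Fin n) ℝ) (hs : Pᵀ = P) (hp : P * P = P) :
    2 * s7ip X (P * X * P) ≤ s7ip X (P * X + X * P) := by
  have key : s7ip X (P * X + X * P) - 2 * s7ip X (P * X * P)
      = s7ip (P * X - X * P) (P * X - X * P) := by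
    unfold s7ip
    have ht : (P * X - X * P)ᵀ = Xᵀ * P - P * Xᵀ := by
      simp [Matrix.transpose_sub, Matrix.transpose_mul, hs]
    rw [ht]
    rw [Matrix.sub_mul, Matrix.mul_sub, Matrix.mul_sub, Matrix.mul_add]
    rw [Matrix.trace_sub, Matrix.trace_sub, Matrix.trace_sub, Matrix.trace_add]
    have e1 : Xᵀ * P * (P * X) = Xᵀ * (P * X) := by
      rw [Matrix.mul_assoc Xᵀ P, ← Matrix.mul_assoc P P, hp]
    have e2 : (P * (Xᵀ * (P * X))).trace = (Xᵀ * (P * X * P)).trace := by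
      rw [Matrix.trace_mul_comm]
      rw [Matrix.mul_assoc (Xᵀ) (P * X) P, Matrix.mul_assoc]
    have e3 : (P * (Xᵀ * (X * P))).trace = (Xᵀ * (X * P)).trace := by
      rw [Matrix.trace_mul_comm, Matrix.mul_assoc, Matrix.mul_assoc, hp]
    have e4 : Xᵀ * P * (X * P) = Xᵀ * (P * X * P) := by
      rw [Matrix.mul_assoc Xᵀ P, ← Matrix.mul_assoc P X P]
    rw [e1, e4, Matrix.mul_assoc P Xᵀ, Matrix.mul_assoc P Xᵀ, e2, e3]
    ring
  have h2 := s7ip_self_nonneg (P * X - X * P)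
  linarith

lemma s7diag {N : ℕ} (u v : Fin N → ℝ) :
    (∑ j, ∑ k, u j * (v k * if j = k then (1 : ℝ) else 0)) = ∑ j, u j * v j := by
  refine Finset.sum_congr rfl fun j _ => ?_
  simp [mul_ite, Finset.sum_ite_eq]

end s7lemmas

theorem stmt_7 {n m : ℕ} (hm : 0 < m)
    (P : Fin m → Matrix (Fin n) (Fin n) ℝ)
    (hPsym : ∀ i, (P i)ᵀ = P i) (hPproj : ∀ i, P i * P i = P i)
    (EP : Matrix (Fin n) (Fin n) ℝ) (hEP : EP = (1 / (m : ℝ)) • ∑ i, P i)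
    (B C : Matrix (Fin n) (Fin n) ℝ → Matrix (Fin n) (Fin n) ℝ)
    (hB : ∀ X, B X = EP * X + X * EP)
    (hC : ∀ X, C X = (1 / (m : ℝ)) • ∑ i, P i * X * P i)
    (ω : ℝ) (hω : ω ∈ Set.Icc (0 : ℝ) 2)
    (μB μBC : Fin (n * n) → ℝ) (hμBmono : Monotone μB) (hμBCmono : Monotone μBC)
    (V W : Fin (n * n) → Matrix (Fin n) (Fin n) ℝ)
    (hVorth : ∀ i j, ((V i)ᵀ * V j).trace = if i = j then (1 : ℝ) else 0)
    (hWorth : ∀ i j, ((W i)ᵀ * W j).trace = if i = j then (1 : ℝ) else 0)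
    (hVeig : ∀ i, B (V i) = μB i • V i)
    (hWeig : ∀ i, B (W i) - ω • C (W i) = μBC i • W i) :
    ∀ i : Fin (n * n), (1 - ω / 2) * μB i ≤ μBC i := by
  obtain ⟨hω0, hω2⟩ := hω
  intro i
  haveI : Nonempty (Fin (n * n)) := ⟨i⟩
  have hi1 : (i : ℕ) + 1 ≤ n * n := i.isLt
  have hi0 : (i : ℕ) ≤ n * n := le_of_lt i.isLt
  have hVip : ∀ a b, s7ip (V a) (V b) = if a = b then (1 : ℝ) else 0 := hVorth
  have hWip : ∀ a b, s7ip (W a) (W b) = if a = b then (1 : ℝ) else 0 := hWorth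
  -- a nonzero coefficient vector in the kernel
  set L : Matrix (Fin (i : ℕ)) (Fin ((i : ℕ) + 1)) ℝ :=
    Matrix.of fun k j => s7ip (V (Fin.castLE hi0 k)) (W (Fin.castLE hi1 j)) with hL
  have hker : LinearMap.ker L.mulVecLin ≠ ⊥ := by
    apply LinearMap.ker_ne_bot_of_finrank_lt
    simp
  obtain ⟨d, hdker, hd0⟩ := (Submodule.ne_bot_iff _).mp hker
  have hdker' : L.mulVec d = 0 := by
    rw [← Matrix.mulVecLin_apply]; exact hdker
  set X : Matrix (Fin n) (Fin n) ℝ := ∑ j, d j • W (Fin.castLE hi1 j) with hX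
  -- linearity of B and C
  have hBsum : ∀ {ι : Type} (s : Finset ι) (c : ι → ℝ) (M : ι → Matrix (Fin n) (Fin n) ℝ),
      B (∑ j ∈ s, c j • M j) = ∑ j ∈ s, c j • B (M j) := by
    intro ι s c M
    rw [hB, Matrix.mul_sum, Matrix.sum_mul, ← Finset.sum_add_distrib]
    refine Finset.sum_congr rfl fun j _ => ?_
    rw [hB, Matrix.mul_smul, Matrix.smul_mul, smul_add]
  have hCsum : ∀ {ι : Type} (s : Finset ι) (c : ι → ℝ) (M : ι → Matrix (Fin n) (Fin n) ℝ),
      C (∑ j ∈ s, c j • M j) = ∑ j ∈ s, c j • C (M j) := by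
    intro ι s c M
    rw [hC]
    have : ∀ k : Fin m, P k * (∑ j ∈ s, c j • M j) * P k
        = ∑ j ∈ s, c j • (P k * M j * P k) := by
      intro k
      rw [Matrix.mul_sum, Matrix.sum_mul]
      exact Finset.sum_congr rfl fun j _ => by rw [Matrix.mul_smul, Matrix.smul_mul]
    simp_rw [this]
    rw [Finset.sum_comm, Finset.smul_sum]
    refine Finset.sum_congr rfl fun j _ => ?_
    rw [hC]
    simp only [Finset.smul_sum, smul_smul]
    exact Finset.sum_congr rfl fun k _ => by rw [mul_comm]
  -- the W-side expansion
  have hXX : s7ip X X = ∑ j, d j ^ 2 := by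
    rw [hX, s7ip_sum_sum]
    simp_rw [hWip, Fin.castLE_inj]
    rw [s7diag]
    exact Finset.sum_congr rfl fun j _ => (sq (d j)).symm
  have hWX : B X - ω • C X
      = ∑ j, (d j * μBC (Fin.castLE hi1 j)) • W (Fin.castLE hi1 j) := by
    rw [hX, hBsum, hCsum, Finset.smul_sum, ← Finset.sum_sub_distrib]
    refine Finset.sum_congr rfl fun j _ => ?_
    rw [smul_comm ω (d j), ← smul_sub, hWeig, smul_smul]
  have hipXBC : s7ip X (B X - ω • C X) = ∑ j, μBC (Fin.castLE hi1 j) * d j ^ 2 := by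
    rw [hWX]
    conv_lhs => rw [hX]
    rw [s7ip_sum_sum]
    simp_rw [hWip, Fin.castLE_inj]
    rw [s7diag]
    exact Finset.sum_congr rfl fun j _ => by ring
  -- the V-side expansion
  have hVli : LinearIndependent ℝ V := by
    rw [linearIndependent_iff']
    intro s g hsum k hk
    have h := congrArg (s7ip (V k)) hsum
    rw [s7ip_sum_right, s7ip_zero] at h
    simp_rw [hVip] at h
    simpa [Finset.sum_ite_eq, hk, mul_ite] using h
  have cardeq : Fintype.card (Fin (n * n)) = Module.finrank ℝ (Matrix (Fin n) (Fin n) ℝ) := by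
    simp [Module.finrank_matrix]
  let bV : Module.Basis (Fin (n * n)) ℝ (Matrix (Fin n) (Fin n) ℝ) :=
    basisOfLinearIndependentOfCardEqFinrank hVli cardeq
  set a : Fin (n * n) → ℝ := fun k => bV.repr X k with ha
  have hXa : X = ∑ k, a k • V k := by
    conv_lhs => rw [← bV.sum_repr X]
    exact Finset.sum_congr rfl fun k _ => by
      rw [coe_basisOfLinearIndependentOfCardEqFinrank]
  have ha_eq : ∀ k, a k = s7ip (V k) X := by
    intro k
    conv_rhs => rw [hXa]
    rw [s7ip_sum_right]
    simp_rw [hVip]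
    simp [Finset.sum_ite_eq, mul_ite]
  have ha0 : ∀ k : Fin (n * n), (k : ℕ) < (i : ℕ) → a k = 0 := by
    intro k hk
    have h := congrFun hdker' ⟨(k : ℕ), hk⟩
    simp only [Matrix.mulVec, dotProduct, hL, Matrix.of_apply, Pi.zero_apply] at h
    have hcast : Fin.castLE hi0 ⟨(k : ℕ), hk⟩ = k := by
      apply Fin.ext; simp
    rw [ha_eq k]
    conv_lhs => rw [hX]
    rw [s7ip_sum_right]
    rw [hcast] at h
    rw [← h]
    exact Finset.sum_congr rfl fun j _ => mul_comm _ _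
  have hXXa : s7ip X X = ∑ k, a k ^ 2 := by
    conv_lhs => rw [hXa]
    rw [s7ip_sum_sum]
    simp_rw [hVip]
    rw [s7diag]
    exact Finset.sum_congr rfl fun k _ => (sq (a k)).symm
  have hipXBX : s7ip X (B X) = ∑ k, μB k * a k ^ 2 := by
    have hBXa : B X = ∑ k, (a k * μB k) • V k := by
      conv_lhs => rw [hXa]
      rw [hBsum]
      exact Finset.sum_congr rfl fun k _ => by rw [hVeig, smul_smul]
    rw [hBXa]
    conv_lhs => rw [hXa]
    rw [s7ip_sum_sum]
    simp_rw [hVip]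
    rw [s7diag]
    exact Finset.sum_congr rfl fun k _ => by ring
  -- inequalities
  have hub : s7ip X (B X - ω • C X) ≤ μBC i * s7ip X X := by
    rw [hipXBC, hXX, Finset.mul_sum]
    refine Finset.sum_le_sum fun j _ => ?_
    have hle : Fin.castLE hi1 j ≤ i := by
      rw [Fin.le_def]
      exact Fin.is_le j
    exact mul_le_mul_of_nonneg_right (hμBCmono hle) (sq_nonneg _)
  have hlb : μB i * s7ip X X ≤ s7ip X (B X) := by
    rw [hipXBX, hXXa, Finset.mul_sum]
    refine Finset.sum_le_sum fun k _ => ?_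
    by_cases hk : (k : ℕ) < (i : ℕ)
    · rw [ha0 k hk]; simp
    · exact mul_le_mul_of_nonneg_right (hμBmono (by rwa [Fin.le_def, ← not_lt])) (sq_nonneg _)
  have hBC2 : 2 * s7ip X (C X) ≤ s7ip X (B X) := by
    have hBform : s7ip X (B X) = (1 / (m : ℝ)) * ∑ k, s7ip X (P k * X + X * P k) := by
      rw [hB, hEP, Matrix.smul_mul, Matrix.mul_smul, ← smul_add, s7ip_smul,
        Matrix.sum_mul, Matrix.mul_sum, ← Finset.sum_add_distrib, s7ip_sum]
    have hCform : s7ip X (C X) = (1 / (m : ℝ)) * ∑ k, s7ip X (P k * X * P k) := by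
      rw [hC, s7ip_smul, s7ip_sum]
    rw [hBform, hCform]
    have hm0 : (0 : ℝ) ≤ 1 / (m : ℝ) := by positivity
    have hsum : ∑ k, 2 * s7ip X (P k * X * P k) ≤ ∑ k, s7ip X (P k * X + X * P k) :=
      Finset.sum_le_sum fun k _ => s7_proj_key (P k) X (hPsym k) (hPproj k)
    rw [← Finset.mul_sum] at hsum
    nlinarith [hsum, hm0]
  have hsplit : s7ip X (B X - ω • C X) = s7ip X (B X) - ω * s7ip X (C X) := by
    rw [s7ip_sub, s7ip_smul]
  have hqq : 0 < s7ip X X := by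
    rw [hXX]
    obtain ⟨j0, hj0⟩ : ∃ j, d j ≠ 0 := by
      by_contra h
      push_neg at h
      exact hd0 (funext h)
    exact Finset.sum_pos' (fun j _ => sq_nonneg _)
      ⟨j0, Finset.mem_univ _, by positivity⟩
  set bq := s7ip X (B X)
  set cq := s7ip X (C X)
  set qq := s7ip X X
  have h1 : bq - ω * cq ≤ μBC i * qq := by rw [← hsplit]; exact hub
  have hωcq : ω * cq ≤ ω / 2 * bq := by nlinarith [mul_nonneg hω0 (by linarith : (0:ℝ) ≤ bq - 2 * cq)]
  have h4 : (1 - ω / 2) * (μB i * qq) ≤ (1 - ω / 2) * bq :=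
    mul_le_mul_of_nonneg_left hlb (by linarith)
  have key : (1 - ω / 2) * μB i * qq ≤ μBC i * qq := by nlinarith [h1, h4, hωcq]
  exact le_of_mul_le_mul_right key hqq
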